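/- Let p be a prime number with p ≠ 7. The polynomial x³ + x² − 2x − 1 is irreducible over the field 𝔽_p = ℤ/pℤ if and only if p is congruent to 2, 3, 4 or 5 modulo 7. (Equivalently: p is inert in the cubic field ℚ(ζ₇ + ζ₇⁻¹), the maximal real subfield of the 7th cyclotomic field, exactly for these congruence classes.) -/

import Mathlib

open Polynomial

private lemma aux_order7_dvd {R : Type*} [CommRing R] (a z : R)
    (hq : z^2 - a*z + 1 = 0) (ha : a^3 + a^2 - 2*a - 1 = 0) (h7R : (7:R) ≠ 0) :
    7 ∣ Nat.card Rˣ := by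
  have h7 : z^7 = 1 := by
    linear_combination (z^5 + a*z^4 + (a^2-1)*z^3 + (a^3-2*a)*z^2 + (a^4-3*a^2+1)*z
      + (a^5-4*a^3+3*a)) * hq + ((a^3-a^2-2*a+1)*z + (-a^2+a+1)) * ha
  have hinv : z * (a - z) = 1 := by linear_combination -hq
  let u : Rˣ := Units.mkOfMulEqOne z (a - z) hinv
  have hu7 : u ^ 7 = 1 := by ext; push_cast [u]; exact h7
  have hune : u ≠ 1 := by
    intro h
    have hz1 : z = 1 := by have := congrArg (Units.val) h; simpa [u] using this
    subst hz1
    exact h7R (by linear_combination ha + (a^2+3*a+4) * hq)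
  haveI : Fact (Nat.Prime 7) := ⟨by norm_num⟩
  have : orderOf u = 7 := orderOf_eq_prime hu7 hune
  exact this ▸ orderOf_dvd_natCard u

private lemma aux_root_cases (p : ℕ) (hp : p.Prime) (hp7 : p ≠ 7) (a : ZMod p)
    (ha : a^3 + a^2 - 2*a - 1 = 0) : p % 7 = 1 ∨ p % 7 = 6 := by
  haveI := Fact.mk hp
  have hp2 : 2 ≤ p := hp.two_le
  have h7Z : (7 : ZMod p) ≠ 0 := by
    intro h
    have : p ∣ 7 := (ZMod.natCast_eq_zero_iff 7 p).mp (by exact_mod_cast h)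
    exact hp7 ((Nat.prime_dvd_prime_iff_eq hp (by norm_num)).mp this)
  by_cases hroot : ∃ z : ZMod p, z^2 - a*z + 1 = 0
  · obtain ⟨z, hq⟩ := hroot
    have hd := aux_order7_dvd a z hq ha h7Z
    rw [Nat.card_eq_fintype_card, ZMod.card_units] at hd
    omega
  · set q : (ZMod p)[X] := X^2 - C a * X + 1 with hqdef
    have hqdeg : q.natDegree = 2 := by unfold q; compute_degree!
    have hqmon : q.Monic := by unfold q; monicity!
    have hirr : Irreducible q := by
      rw [irreducible_iff_roots_eq_zero_of_degree_le_three (by omega) (by omega)]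
      by_contra h
      obtain ⟨z, hz⟩ := Multiset.exists_mem_of_ne_zero h
      rw [mem_roots hqmon.ne_zero] at hz
      refine hroot ⟨z, ?_⟩
      have := hz; unfold q at this; simp [IsRoot] at this; linear_combination this
    haveI := Fact.mk hirr
    let pb := AdjoinRoot.powerBasis' hqmon
    haveI : Module.Finite (ZMod p) (AdjoinRoot q) := pb.finite
    haveI : Finite (AdjoinRoot q) := Module.finite_of_finite (ZMod p)
    have hcardR : Nat.card (AdjoinRoot q) = p ^ 2 := by
      haveI : Fintype (AdjoinRoot q) := Fintype.ofFinite _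
      rw [Nat.card_eq_fintype_card, Module.card_fintype pb.basis, ZMod.card]
      simp [pb, hqdeg]
    set z := AdjoinRoot.root q with hz
    set a' := algebraMap (ZMod p) (AdjoinRoot q) a with ha'
    have hqz : z^2 - a'*z + 1 = 0 := by
      have := AdjoinRoot.eval₂_root q
      unfold q at this
      simpa [ha'] using this
    have ha2 : a'^3 + a'^2 - 2*a' - 1 = 0 := by
      have := congrArg (algebraMap (ZMod p) (AdjoinRoot q)) ha
      simp only [map_sub, map_add, map_mul, map_pow, map_one, map_zero, map_ofNat] at this
      simpa [ha'] using this
    have h7R : (7 : AdjoinRoot q) ≠ 0 := by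
      intro h
      apply h7Z
      have h0 : algebraMap (ZMod p) (AdjoinRoot q) 7 = 0 := by
        rw [map_ofNat]; exact h
      exact (map_eq_zero_iff _ (algebraMap (ZMod p) (AdjoinRoot q)).injective).mp h0
    have hd := aux_order7_dvd a' z hqz ha2 h7R
    rw [Nat.card_units, hcardR] at hd
    have hd' : (7:ℤ) ∣ ((p:ℤ)-1)*((p:ℤ)+1) := by
      have h1 : (1:ℕ) ≤ p^2 := by nlinarith
      have : ((p^2 - 1 : ℕ) : ℤ) = ((p:ℤ)-1)*((p:ℤ)+1) := by push_cast [h1]; ring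
      rw [← this]
      exact_mod_cast Int.natCast_dvd_natCast.mpr hd
    have h7p : Prime (7:ℤ) := Int.prime_iff_natAbs_prime.mpr (by norm_num)
    rcases h7p.dvd_mul.mp hd' with h | h <;> omega

private lemma aux_not_irred (p : ℕ) (hp : p.Prime) (hmod : p % 7 = 1 ∨ p % 7 = 6) :
    ¬ Irreducible (X ^ 3 + X ^ 2 - 2 * X - 1 : (ZMod p)[X]) := by
  haveI := Fact.mk hp
  intro hirr
  set K := GaloisField p 2 with hK
  haveI : Fact (Nat.Prime 7) := ⟨by norm_num⟩
  have hcard : Nat.card Kˣ = p^2 - 1 := by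
    rw [Nat.card_units, GaloisField.card p 2 (by norm_num)]
  have h7 : 7 ∣ Nat.card Kˣ := by
    rw [hcard]
    have h1 : p^2 % 7 = 1 := by
      rw [Nat.pow_mod]
      rcases hmod with h | h <;> rw [h]
    omega
  haveI : Fintype Kˣ := Fintype.ofFinite _
  have h7' : 7 ∣ Fintype.card Kˣ := by rwa [Nat.card_eq_fintype_card] at h7
  obtain ⟨u, hu⟩ := exists_prime_orderOf_dvd_card 7 h7'
  set z : K := (u : K) with hz
  have h7z : z^7 = 1 := by
    have : u^7 = 1 := by rw [← hu]; exact pow_orderOf_eq_one u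
    have h2 := congrArg (Units.val) this
    push_cast at h2
    exact h2
  have hz1 : z ≠ 1 := by
    intro h
    have : u = 1 := Units.ext h
    rw [this, orderOf_one] at hu; norm_num at hu
  have hΦ : z^6+z^5+z^4+z^3+z^2+z+1 = 0 := by
    have : (z - 1) * (z^6+z^5+z^4+z^3+z^2+z+1) = 0 := by linear_combination h7z
    rcases mul_eq_zero.mp this with h | h
    · exact absurd (by linear_combination h) hz1
    · exact h
  set a : K := z + z^6 with ha
  have haroot : a^3 + a^2 - 2*a - 1 = 0 := by
    linear_combination (z^11 + 3*z^6 + z^5 + z^4 + 3*z + 2) * h7z + hΦ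
  have hmon : (X ^ 3 + X ^ 2 - 2 * X - 1 : (ZMod p)[X]).Monic := by monicity!
  have haev : aeval a (X ^ 3 + X ^ 2 - 2 * X - 1 : (ZMod p)[X]) = 0 := by
    simp only [map_add, map_sub, map_mul, map_pow, aeval_X, map_one, map_ofNat]
    linear_combination haroot
  have hmin : (X ^ 3 + X ^ 2 - 2 * X - 1 : (ZMod p)[X]) = minpoly (ZMod p) a :=
    minpoly.eq_of_irreducible_of_monic hirr haev hmon
  have hint : IsIntegral (ZMod p) a := IsIntegral.of_finite (ZMod p) a
  have hdvd := minpoly.degree_dvd hint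
  rw [← hmin, GaloisField.finrank p (by norm_num)] at hdvd
  have hdeg : (X ^ 3 + X ^ 2 - 2 * X - 1 : (ZMod p)[X]).natDegree = 3 := by compute_degree!
  rw [hdeg] at hdvd
  omega

/-- The minimal polynomial of `ζ₇ + ζ₇⁻¹` is irreducible modulo a prime
`p ≠ 7` if and only if `p ≡ 2, 3, 4, 5 (mod 7)`. -/
theorem irreducible_cubic_seven
    (p : ℕ) (hp : p.Prime) (hp7 : p ≠ 7) :
    Irreducible (X ^ 3 + X ^ 2 - 2 * X - 1 : (ZMod p)[X]) ↔
      (p % 7 = 2 ∨ p % 7 = 3 ∨ p % 7 = 4 ∨ p % 7 = 5) := by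
  haveI := Fact.mk hp
  have hp0 : p % 7 ≠ 0 := by
    intro h
    have : (7:ℕ) ∣ p := Nat.dvd_of_mod_eq_zero h
    exact hp7 (((Nat.prime_dvd_prime_iff_eq (by norm_num) hp).mp this).symm)
  have hdeg : (X ^ 3 + X ^ 2 - 2 * X - 1 : (ZMod p)[X]).natDegree = 3 := by compute_degree!
  have hmon : (X ^ 3 + X ^ 2 - 2 * X - 1 : (ZMod p)[X]).Monic := by monicity!
  constructor
  · intro hirr
    by_contra h
    have hmod : p % 7 = 1 ∨ p % 7 = 6 := by
      by_contra h2
      have := aux_root_cases p hp hp7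
      omega
    exact aux_not_irred p hp hmod hirr
  · intro hmod
    rw [irreducible_iff_roots_eq_zero_of_degree_le_three (by omega) (by omega)]
    by_contra h
    obtain ⟨a, haa⟩ := Multiset.exists_mem_of_ne_zero h
    rw [mem_roots hmon.ne_zero] at haa
    have ha : a^3 + a^2 - 2*a - 1 = 0 := by
      have := haa; simp [IsRoot] at this; linear_combination this
    have := aux_root_cases p hp hp7 a ha
    omega
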